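/- Let R be an integral domain and I a proper t-ideal of R. Then I⁻¹ is a subring of the quotient field K if and only if I is not t-invertible and (M:I) is a subring of K for each t-maximal ideal M of R containing I. -/

import Mathlib

/-!
Common definitions: star operations (`v`- and `t`-closure), `t`-ideals, `t`-invertibility,
PVMDs, overrings, `t`-linked and `t`-flat overrings, localizations inside the quotient
field, Nagata and Kaplansky transforms, endomorphism rings of ideals.
-/

open scoped Classical

namespace PVMDPaper

noncomputable section

section Generic

variable (A : Type*) [CommRing A] (K : Type*) [Field K] [Algebra A K]

/-- The image of an integral ideal of `A` inside the field `K`, as an `A`-submodule of `K`. -/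
def toK (I : Ideal A) : Submodule A K := Submodule.map (Algebra.linearMap A K) I

variable {A K}

/-- The dual `I⁻¹ = (A : I) = {x ∈ K : x I ⊆ A}` of a submodule of `K`. -/
def dual (I : Submodule A K) : Submodule A K := 1 / I

/-- The `v`-closure `I_v = (I⁻¹)⁻¹`. -/
def vOp (I : Submodule A K) : Submodule A K := 1 / (1 / I)

/-- The `t`-closure `I_t`: the union of `J_v` where `J` ranges over the nonzero finitely
generated submodules `J ≤ I` (the union of this directed family is its supremum). -/
def tOp (I : Submodule A K) : Submodule A K :=
  sSup {V | ∃ J : Submodule A K, J ≠ ⊥ ∧ J.FG ∧ J ≤ I ∧ V = vOp J}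

variable (K)

/-- An (integral) ideal `I` of `A` is a `t`-ideal if `I = I_t`. -/
def IsTIdeal (I : Ideal A) : Prop := tOp (toK A K I) = toK A K I

/-- An ideal `I` is `t`-invertible if `(I I⁻¹)_t = A`. -/
def IsTInvertible (I : Ideal A) : Prop := tOp (toK A K I * dual (toK A K I)) = 1

/-- A `t`-maximal ideal: an ideal maximal in the set of proper integral `t`-ideals. -/
def IsTMaximal (M : Ideal A) : Prop :=
  M ≠ ⊤ ∧ IsTIdeal K M ∧ ∀ J : Ideal A, J ≠ ⊤ → IsTIdeal K J → M ≤ J → J = M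

variable (A)

/-- `A` is a Prüfer `v`-multiplication domain: every nonzero finitely generated ideal
is `t`-invertible. -/
def IsPVMD : Prop := ∀ I : Ideal A, I ≠ ⊥ → I.FG → IsTInvertible K I

/-- `Spec_t(A)` is Noetherian: the ascending chain condition on radical `t`-ideals. -/
def TSpecNoetherian : Prop :=
  ∀ f : ℕ →o Ideal A, (∀ n, IsTIdeal K (f n) ∧ (f n).radical = f n) →
    ∃ n, ∀ m, n ≤ m → f m = f n

variable {A K}

/-- A submodule of `K` is a subring of `K` iff it contains `1` and is closed under
multiplication (being an additive subgroup already). -/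
def IsSubringOf (S : Submodule A K) : Prop :=
  (1 : K) ∈ S ∧ ∀ x ∈ S, ∀ y ∈ S, x * y ∈ S

variable (K)

/-- The localization `A_P = {a/s : a ∈ A, s ∈ A ∖ P}` viewed as a subset of `K`. -/
def loc (P : Ideal A) : Set K :=
  {x | ∃ a s : A, s ∉ P ∧ x * algebraMap A K s = algebraMap A K a}

/-- The set `J A_P = {a/s : a ∈ J, s ∈ A ∖ P} ⊆ K`. -/
def locIdealAt (J P : Ideal A) : Set K :=
  {x | ∃ a ∈ J, ∃ s : A, s ∉ P ∧ x * algebraMap A K s = algebraMap A K a}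

/-- `Z(A, I)`: the set of zero divisors on `A/I`. -/
def ZSet (I : Ideal A) : Set A := {x | ∃ a : A, a ∉ I ∧ x * a ∈ I}

/-- `Q` is a maximal prime ideal of `Z(A,I)`: a prime contained in `Z(A,I)`, maximal
(under inclusion) among the primes contained in `Z(A,I)`. -/
def MaxPrimeOfZ (I Q : Ideal A) : Prop :=
  Q.IsPrime ∧ (Q : Set A) ⊆ ZSet I ∧
    ∀ Q' : Ideal A, Q'.IsPrime → (Q' : Set A) ⊆ ZSet I → Q ≤ Q' → Q' = Q

end Generic

section Overring

variable {R : Type*} [CommRing R] [IsDomain R]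
variable {K : Type*} [Field K] [Algebra R K] [IsFractionRing R K]

/-- The extension `IT` of an ideal `I` of `R` to an overring `T`, as a `T`-submodule of `K`. -/
def extendI (I : Ideal R) (T : Subalgebra R K) : Submodule T K :=
  Submodule.span T (algebraMap R K '' (I : Set R))

/-- The extension `IT` of an `R`-submodule `I` of `K` to an overring `T`. -/
def extendS (I : Submodule R K) (T : Subalgebra R K) : Submodule T K :=
  Submodule.span T (I : Set K)

/-- An overring `T` of `R` is `t`-linked over `R` if `(IT)⁻¹ = T` for each finitely
generated ideal `I` of `R` with `I⁻¹ = R`. -/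
def IsTLinked (T : Subalgebra R K) : Prop :=
  ∀ I : Ideal R, I.FG → dual (toK R K I) = 1 → dual (extendI I T) = 1

/-- An overring `T` of `R` is `t`-flat over `R` if `T_M = R_{M ∩ R}` for each
`t`-maximal ideal `M` of `T`. -/
def IsTFlat (T : Subalgebra R K) : Prop :=
  ∀ M : Ideal T, IsTMaximal K M → loc K M = loc K (M.comap (algebraMap R T))

variable (R K)

/-- `R` is a `tQR`-domain: a PVMD all of whose `t`-linked overrings are localizations
of `R` at multiplicative sets. -/
def IsTQR : Prop :=
  IsPVMD R K ∧ ∀ T : Subalgebra R K, IsTLinked T → ∃ S : Submonoid R,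
    (T : Set K) = {x | ∃ a : R, ∃ s ∈ S, x * algebraMap R K s = algebraMap R K a}

variable {R K}
variable (K)

/-- The endomorphism ring `(I : I) = {x ∈ K : x I ⊆ I}` of an ideal `I`, as an
overring of `R`. -/
def endoRing (I : Ideal R) : Subalgebra R K where
  carrier := {x : K | ∀ y ∈ toK R K I, x * y ∈ toK R K I}
  mul_mem' := by
    intro a b ha hb y hy
    rw [mul_assoc]
    exact ha _ (hb _ hy)
  one_mem' := by
    intro y hy
    rwa [one_mul]
  add_mem' := by
    intro a b ha hb y hy
    rw [add_mul]
    exact Submodule.add_mem _ (ha y hy) (hb y hy)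
  zero_mem' := by
    intro y hy
    rw [zero_mul]
    exact Submodule.zero_mem _
  algebraMap_mem' := by
    intro r y hy
    rw [← Algebra.smul_def]
    exact Submodule.smul_mem _ r hy

set_option synthInstance.maxHeartbeats 400000 in
/-- The ideal `I`, viewed as an ideal of its endomorphism ring `(I : I)`. -/
def idealInEndo (I : Ideal R) : Ideal (endoRing K I) where
  carrier := {x | (x : K) ∈ toK R K I}
  add_mem' := by
    intro a b ha hb
    simp only [Set.mem_setOf_eq] at *
    rw [AddMemClass.coe_add]
    exact Submodule.add_mem _ ha hb
  zero_mem' := by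
    simp only [Set.mem_setOf_eq, ZeroMemClass.coe_zero]
    exact Submodule.zero_mem _
  smul_mem' := by
    intro c x hx
    simp only [Set.mem_setOf_eq] at *
    rw [smul_eq_mul, MulMemClass.coe_mul]
    exact c.2 _ hx

/-- The Kaplansky transform `Ω(I) = {u ∈ K : ∀ a ∈ I, ∃ n ≥ 1, u aⁿ ∈ R}`, as an
overring of `R`. -/
def kaplansky (I : Ideal R) : Subalgebra R K where
  carrier := {u : K | ∀ a ∈ I, ∃ n : ℕ, 0 < n ∧
    ∃ r : R, u * (algebraMap R K a) ^ n = algebraMap R K r}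
  mul_mem' := by
    intro u v hu hv a ha
    obtain ⟨n, hn, r, hr⟩ := hu a ha
    obtain ⟨m, hm, s, hs⟩ := hv a ha
    refine ⟨n + m, by omega, r * s, ?_⟩
    rw [map_mul, ← hr, ← hs, pow_add]
    ring
  one_mem' := by
    intro a ha
    exact ⟨1, one_pos, a, by rw [pow_one, one_mul]⟩
  add_mem' := by
    intro u v hu hv a ha
    obtain ⟨n, hn, r, hr⟩ := hu a ha
    obtain ⟨m, hm, s, hs⟩ := hv a ha
    refine ⟨n + m, by omega, r * a ^ m + s * a ^ n, ?_⟩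
    rw [map_add, map_mul, map_mul, map_pow, map_pow, ← hr, ← hs, pow_add, add_mul]
    ring
  zero_mem' := by
    intro a ha
    exact ⟨1, one_pos, 0, by rw [map_zero, zero_mul]⟩
  algebraMap_mem' := by
    intro r a ha
    exact ⟨1, one_pos, r * a, by rw [map_mul, pow_one]⟩

/-- The Nagata (ideal) transform `T(I) = ⋃_{n ≥ 1} (R : Iⁿ)`, as an overring of `R`. -/
def nagata (I : Ideal R) : Subalgebra R K where
  carrier := {x : K | ∃ n : ℕ, ∀ y ∈ I ^ (n + 1),
    ∃ r : R, x * algebraMap R K y = algebraMap R K r}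
  mul_mem' := by
    intro x x' hx hx'
    obtain ⟨n, hn⟩ := hx
    obtain ⟨m, hm⟩ := hx'
    refine ⟨n + m + 1, fun y hy => ?_⟩
    rw [show n + m + 1 + 1 = (n + 1) + (m + 1) by omega, pow_add] at hy
    refine Submodule.mul_induction_on hy ?_ ?_
    · intro a ha b hb
      obtain ⟨r, hr⟩ := hn a ha
      obtain ⟨s, hs⟩ := hm b hb
      refine ⟨r * s, ?_⟩
      rw [map_mul, map_mul, ← hr, ← hs]
      ring
    · rintro y1 y2 ⟨r1, h1⟩ ⟨r2, h2⟩
      exact ⟨r1 + r2, by rw [map_add, map_add, mul_add, h1, h2]⟩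
  one_mem' := ⟨0, fun y _ => ⟨y, by rw [one_mul]⟩⟩
  add_mem' := by
    intro x x' hx hx'
    obtain ⟨n, hn⟩ := hx
    obtain ⟨m, hm⟩ := hx'
    refine ⟨n + m + 1, fun y hy => ?_⟩
    have h1 : y ∈ I ^ (n + 1) := Ideal.pow_le_pow_right (by omega) hy
    have h2 : y ∈ I ^ (m + 1) := Ideal.pow_le_pow_right (by omega) hy
    obtain ⟨r, hr⟩ := hn y h1
    obtain ⟨s, hs⟩ := hm y h2
    exact ⟨r + s, by rw [map_add, add_mul, hr, hs]⟩
  zero_mem' := ⟨0, fun y _ => ⟨0, by rw [map_zero, zero_mul]⟩⟩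
  algebraMap_mem' := by
    intro r
    exact ⟨0, fun y _ => ⟨r * y, by rw [map_mul]⟩⟩

end Overring

section Aux

variable {A : Type*} [CommRing A] {K : Type*} [Field K] [Algebra A K]

lemma le_oneDiv_oneDiv (S : Submodule A K) : S ≤ 1 / (1 / S) := by
  intro x hx
  rw [Submodule.mem_div_iff_forall_mul_mem]
  intro y hy
  rw [Submodule.mem_div_iff_forall_mul_mem] at hy
  rw [mul_comm]
  exact hy x hx

lemma oneDiv_le_oneDiv {S T : Submodule A K} (h : S ≤ T) : 1 / T ≤ 1 / S := by
  intro x hx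
  rw [Submodule.mem_div_iff_forall_mul_mem] at hx ⊢
  exact fun y hy => hx y (h hy)

lemma oneDiv_oneDiv_oneDiv (S : Submodule A K) : 1 / (1 / (1 / S)) = 1 / S :=
  le_antisymm (oneDiv_le_oneDiv (le_oneDiv_oneDiv S)) (le_oneDiv_oneDiv (1 / S))

lemma le_vOp (S : Submodule A K) : S ≤ vOp S := le_oneDiv_oneDiv S

lemma vOp_mono {S T : Submodule A K} (h : S ≤ T) : vOp S ≤ vOp T :=
  oneDiv_le_oneDiv (oneDiv_le_oneDiv h)

lemma vOp_vOp (S : Submodule A K) : vOp (vOp S) = vOp S :=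
  oneDiv_oneDiv_oneDiv (1 / S)

lemma one_div_one_eq : (1 / 1 : Submodule A K) = 1 := by
  apply le_antisymm
  · intro x hx
    rw [Submodule.mem_div_iff_forall_mul_mem] at hx
    simpa using hx 1 (Submodule.mem_one.mpr ⟨1, map_one _⟩)
  · intro x hx
    rw [Submodule.mem_div_iff_forall_mul_mem]
    intro y hy
    obtain ⟨a, rfl⟩ := Submodule.mem_one.mp hx
    obtain ⟨b, rfl⟩ := Submodule.mem_one.mp hy
    exact Submodule.mem_one.mpr ⟨a * b, by rw [map_mul]⟩

lemma vOp_le_one {S : Submodule A K} (h : S ≤ 1) : vOp S ≤ 1 := by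
  have := vOp_mono h
  rwa [show vOp (1 : Submodule A K) = 1 by
    unfold vOp; rw [one_div_one_eq, one_div_one_eq]] at this

lemma vOp_le_tOp {S J : Submodule A K} (hJ : J ≠ ⊥) (hfg : J.FG) (hle : J ≤ S) :
    vOp J ≤ tOp S := le_sSup ⟨J, hJ, hfg, hle, rfl⟩

lemma le_tOp (S : Submodule A K) : S ≤ tOp S := by
  intro x hx
  by_cases hx0 : x = (0 : K)
  · rw [hx0]; exact Submodule.zero_mem _
  · exact vOp_le_tOp (by rwa [ne_eq, Submodule.span_singleton_eq_bot])
      (Submodule.fg_span_singleton x)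
      ((Submodule.span_singleton_le_iff_mem x S).mpr hx)
      (le_vOp _ (Submodule.mem_span_singleton_self x))

lemma tOp_mono {S T : Submodule A K} (h : S ≤ T) : tOp S ≤ tOp T := by
  apply sSup_le_sSup
  rintro _ ⟨J, h1, h2, h3, rfl⟩
  exact ⟨J, h1, h2, h3.trans h, rfl⟩

lemma tOp_le_one {S : Submodule A K} (h : S ≤ 1) : tOp S ≤ 1 := by
  apply sSup_le
  rintro _ ⟨J, _, _, hle, rfl⟩
  exact vOp_le_one (hle.trans h)

lemma tOp_bot : tOp (⊥ : Submodule A K) = ⊥ := by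
  unfold tOp
  convert (sSup_empty : sSup (∅ : Set (Submodule A K)) = ⊥)
  · rfl
  rw [Set.eq_empty_iff_forall_notMem]
  rintro _ ⟨J, hb, _, hl, rfl⟩
  exact hb (le_bot_iff.mp hl)

lemma mem_tOp {S : Submodule A K} (hS : S ≠ ⊥) {x : K} (hx : x ∈ tOp S) :
    ∃ J : Submodule A K, J ≠ ⊥ ∧ J.FG ∧ J ≤ S ∧ x ∈ vOp J := by
  obtain ⟨y, hyS, hy0⟩ := (Submodule.ne_bot_iff S).mp hS
  have hne : {V | ∃ J : Submodule A K, J ≠ ⊥ ∧ J.FG ∧ J ≤ S ∧ V = vOp J}.Nonempty :=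
    ⟨vOp (Submodule.span A {y}), Submodule.span A {y},
      by rwa [ne_eq, Submodule.span_singleton_eq_bot],
      Submodule.fg_span_singleton y,
      (Submodule.span_singleton_le_iff_mem y S).mpr hyS, rfl⟩
  have hdir : DirectedOn (· ≤ ·)
      {V | ∃ J : Submodule A K, J ≠ ⊥ ∧ J.FG ∧ J ≤ S ∧ V = vOp J} := by
    rintro _ ⟨J1, h1b, h1f, h1l, rfl⟩ _ ⟨J2, h2b, h2f, h2l, rfl⟩
    exact ⟨vOp (J1 ⊔ J2),
      ⟨J1 ⊔ J2, fun h => h1b (le_bot_iff.mp (le_sup_left.trans h.le)),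
        h1f.sup h2f, sup_le h1l h2l, rfl⟩,
      vOp_mono le_sup_left, vOp_mono le_sup_right⟩
  obtain ⟨V, ⟨J, h1, h2, h3, rfl⟩, hxV⟩ := (Submodule.mem_sSup_of_directed hne hdir).mp hx
  exact ⟨J, h1, h2, h3, hxV⟩

lemma mul_tOp_le (S T : Submodule A K) : S * tOp T ≤ tOp (S * T) := by
  rw [Submodule.mul_le]
  intro a ha v hv
  by_cases hT : T = ⊥
  · rw [hT, tOp_bot] at hv
    rw [Submodule.mem_bot] at hv
    rw [hv, mul_zero]
    exact Submodule.zero_mem _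
  by_cases ha0 : a = (0 : K)
  · rw [ha0, zero_mul]
    exact Submodule.zero_mem _
  obtain ⟨J, hJb, hJf, hJl, hvJ⟩ := mem_tOp hT hv
  obtain ⟨j0, hj0J, hj00⟩ := (Submodule.ne_bot_iff J).mp hJb
  have hmem : a * v ∈ vOp (Submodule.span A {a} * J) := by
    rw [show vOp (Submodule.span A {a} * J) = 1 / (1 / (Submodule.span A {a} * J)) from rfl,
      Submodule.mem_div_iff_forall_mul_mem]
    intro u hu
    rw [Submodule.mem_div_iff_forall_mul_mem] at hu
    have hau : u * a ∈ (1 : Submodule A K) / J := by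
      rw [Submodule.mem_div_iff_forall_mul_mem]
      intro j hj
      have h1 : a * j ∈ Submodule.span A {a} * J :=
        Submodule.mul_mem_mul (Submodule.mem_span_singleton_self a) hj
      have := hu _ h1
      rwa [← mul_assoc] at this
    have hv1 : v * (u * a) ∈ (1 : Submodule A K) := by
      have := hvJ
      rw [show vOp J = 1 / (1 / J) from rfl, Submodule.mem_div_iff_forall_mul_mem] at this
      exact this _ hau
    have : a * v * u = v * (u * a) := by ring
    rwa [this]
  refine vOp_le_tOp ?_ ((Submodule.fg_span_singleton a).mul hJf)
    (mul_le_mul' ((Submodule.span_singleton_le_iff_mem a S).mpr ha) hJl) hmem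
  rw [Submodule.ne_bot_iff]
  exact ⟨a * j0, Submodule.mul_mem_mul (Submodule.mem_span_singleton_self a) hj0J,
    mul_ne_zero ha0 hj00⟩

lemma tOp_tOp (S : Submodule A K) : tOp (tOp S) = tOp S := by
  by_cases hS : S = ⊥
  · rw [hS, tOp_bot, tOp_bot]
  refine le_antisymm (sSup_le ?_) (le_tOp _)
  rintro _ ⟨J', hJ'b, hJ'f, hJ'l, rfl⟩
  obtain ⟨t, ht⟩ := hJ'f
  have hch : ∀ y ∈ t, ∃ J : Submodule A K, J ≠ ⊥ ∧ J.FG ∧ J ≤ S ∧ (y : K) ∈ vOp J := by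
    intro y hy
    exact mem_tOp hS (hJ'l (ht ▸ Submodule.subset_span hy))
  choose f hfb hff hfl hfm using hch
  have htne : t.Nonempty := by
    rcases Finset.eq_empty_or_nonempty t with rfl | h
    · exact absurd (by rw [← ht]; simp) hJ'b
    · exact h
  obtain ⟨y0, hy0⟩ := htne
  set Jsum := t.attach.sup fun y => f y.1 y.2 with hJs
  have hJsb : Jsum ≠ ⊥ := fun h =>
    hfb y0 hy0 (le_bot_iff.mp ((Finset.le_sup (Finset.mem_attach t ⟨y0, hy0⟩)).trans h.le))
  have hJsf : Jsum.FG := Submodule.fg_finset_sup _ _ fun y _ => hff y.1 y.2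
  have hJsl : Jsum ≤ S := Finset.sup_le fun y _ => hfl y.1 y.2
  have hJ'le : J' ≤ vOp Jsum := by
    rw [← ht, Submodule.span_le]
    intro y hy
    exact vOp_mono (Finset.le_sup (Finset.mem_attach t ⟨y, hy⟩)) (hfm y hy)
  calc vOp J' ≤ vOp (vOp Jsum) := vOp_mono hJ'le
    _ = vOp Jsum := vOp_vOp _
    _ ≤ tOp S := vOp_le_tOp hJsb hJsf hJsl

end Aux
section Aux2

variable {R : Type*} [CommRing R] [IsDomain R]
variable {K : Type*} [Field K] [Algebra R K] [IsFractionRing R K]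

lemma toK_mono {I J : Ideal R} (h : I ≤ J) : toK R K I ≤ toK R K J :=
  Submodule.map_mono h

lemma toK_le_one (I : Ideal R) : toK R K I ≤ 1 := by
  rintro _ ⟨a, _, rfl⟩
  exact Submodule.mem_one.mpr ⟨a, rfl⟩

lemma mem_toK {I : Ideal R} {a : R} : algebraMap R K a ∈ toK R K I ↔ a ∈ I := by
  constructor
  · rintro ⟨b, hb, hba⟩
    rwa [IsFractionRing.injective R K hba] at hb
  · intro ha
    exact ⟨a, ha, rfl⟩

lemma toK_top : toK R K (⊤ : Ideal R) = 1 := by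
  unfold toK
  rw [Submodule.map_top, ← Submodule.one_eq_range]

lemma toK_ne_bot {I : Ideal R} (h : I ≠ ⊥) : toK R K I ≠ ⊥ := by
  obtain ⟨a, haI, ha0⟩ := (Submodule.ne_bot_iff I).mp h
  rw [Submodule.ne_bot_iff]
  refine ⟨algebraMap R K a, mem_toK.mpr haI, ?_⟩
  simpa using (map_ne_zero_iff _ (IsFractionRing.injective R K)).mpr ha0

lemma toK_eq_one {I : Ideal R} (h : toK R K I = 1) : I = ⊤ := by
  rw [Ideal.eq_top_iff_one]
  have : (1 : K) ∈ toK R K I := h ▸ Submodule.mem_one.mpr ⟨1, map_one _⟩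
  rw [show (1 : K) = algebraMap R K 1 from (map_one _).symm] at this
  exact mem_toK.mp this

/-- The ideal of `R` corresponding to a submodule of `K` contained in `R`. -/
def ofK (S : Submodule R K) : Ideal R := S.comap (Algebra.linearMap R K)

lemma toK_ofK {S : Submodule R K} (h : S ≤ 1) : toK R K (ofK S) = S := by
  unfold toK ofK
  rw [Submodule.map_comap_eq, ← Submodule.one_eq_range, inf_eq_right.mpr h]

lemma le_ofK {I : Ideal R} {S : Submodule R K} : I ≤ ofK S ↔ toK R K I ≤ S :=
  Submodule.map_le_iff_le_comap.symm

/-- Every proper `t`-ideal is contained in a `t`-maximal ideal. -/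
lemma exists_tMaximal (T : Ideal R) (hT : T ≠ ⊤) (htT : IsTIdeal K T) :
    ∃ M : Ideal R, IsTMaximal K M ∧ T ≤ M := by
  have ih : ∀ c ⊆ {J : Ideal R | J ≠ ⊤ ∧ IsTIdeal K J}, IsChain (· ≤ ·) c →
      ∀ y ∈ c, ∃ ub ∈ {J : Ideal R | J ≠ ⊤ ∧ IsTIdeal K J}, ∀ z ∈ c, z ≤ ub := by
    intro c hcs hc y hyc
    have hcdir : DirectedOn (· ≤ ·) c := hc.directedOn
    have hcne : c.Nonempty := ⟨y, hyc⟩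
    refine ⟨sSup c, ⟨?_, ?_⟩, fun z hz => le_sSup hz⟩
    · intro htot
      have : (1 : R) ∈ sSup c := htot ▸ Submodule.mem_top
      obtain ⟨J, hJc, hJ1⟩ := (Submodule.mem_sSup_of_directed hcne hcdir).mp this
      exact (hcs hJc).1 (Ideal.eq_top_iff_one J |>.mpr hJ1)
    · unfold IsTIdeal
      refine le_antisymm ?_ (le_tOp _)
      by_cases hU : toK R K (sSup c) = ⊥
      · rw [hU, tOp_bot]
      intro x hx
      obtain ⟨J, hJb, hJf, hJl, hxJ⟩ := mem_tOp hU hx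
      have himdir : DirectedOn (· ≤ ·) ((fun C : Ideal R => toK R K C) '' c) := by
        rintro _ ⟨C1, h1, rfl⟩ _ ⟨C2, h2, rfl⟩
        obtain ⟨C3, h3, h13, h23⟩ := hcdir C1 h1 C2 h2
        exact ⟨toK R K C3, ⟨C3, h3, rfl⟩, toK_mono h13, toK_mono h23⟩
      have himne : ((fun C : Ideal R => toK R K C) '' c).Nonempty := ⟨_, y, hyc, rfl⟩
      have hJle : J ≤ sSup ((fun C : Ideal R => toK R K C) '' c) := by
        refine hJl.trans ?_
        rw [show toK R K (sSup c) = Submodule.map (Algebra.linearMap R K) (sSup c) from rfl,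
          Submodule.map_le_iff_le_comap]
        exact sSup_le fun C hC => Submodule.map_le_iff_le_comap.mp
          (le_sSup ⟨C, hC, rfl⟩)
      obtain ⟨V, ⟨C, hCc, rfl⟩, hJC⟩ :=
        (CompleteLattice.isCompactElement_iff_le_of_directed_sSup_le (Submodule R K) J).mp
          ((Submodule.fg_iff_compact J).mp hJf) _ himne himdir hJle
      have : x ∈ tOp (toK R K C) := vOp_le_tOp hJb hJf hJC hxJ
      rw [(hcs hCc).2] at this
      exact toK_mono (le_sSup hCc) this
  obtain ⟨M, hTM, hMs, hMmax⟩ :=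
    zorn_le_nonempty₀ {J : Ideal R | J ≠ ⊤ ∧ IsTIdeal K J} ih T ⟨hT, htT⟩
  exact ⟨M, ⟨hMs.1, hMs.2, fun J hJt hJtI hMJ =>
    le_antisymm (hMmax ⟨hJt, hJtI⟩ hMJ) hMJ⟩, hTM⟩

end Aux2
section Statements

variable {R : Type*} [CommRing R] [IsDomain R]
variable {K : Type*} [Field K] [Algebra R K] [IsFractionRing R K]

/-- Let `I` be a proper `t`-ideal of an integral domain `R`. Then `I⁻¹`
is a subring of `K` iff `I` is not `t`-invertible and `(M : I)` is a subring of `K` for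
each `t`-maximal ideal `M` of `R` containing `I`. -/
theorem statement_1 (I : Ideal R) (hbot : I ≠ ⊥) (htop : I ≠ ⊤) (htI : IsTIdeal K I) :
    IsSubringOf (dual (toK R K I)) ↔
      ¬ IsTInvertible K I ∧
        ∀ M : Ideal R, IsTMaximal K M → I ≤ M → IsSubringOf (toK R K M / toK R K I) := by
  have htI' : tOp (toK R K I) = toK R K I := htI
  have hdual : ∀ x : K, x ∈ dual (toK R K I) ↔ ∀ z ∈ toK R K I, x * z ∈ (1 : Submodule R K) :=
    fun x => Submodule.mem_div_iff_forall_mul_mem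
  have hIJle1 : toK R K I * dual (toK R K I) ≤ 1 := by
    rw [Submodule.mul_le]
    intro i hi u hu
    rw [mul_comm]
    exact (hdual u).mp hu i hi
  have hone_mem : (1 : K) ∈ dual (toK R K I) := by
    rw [hdual]
    intro z hz
    rw [one_mul]
    exact toK_le_one I hz
  have hdiv_le_dual : ∀ M : Ideal R, toK R K M / toK R K I ≤ dual (toK R K I) := by
    intro M x hx
    rw [Submodule.mem_div_iff_forall_mul_mem] at hx
    rw [hdual]
    exact fun z hz => toK_le_one M (hx z hz)
  constructor
  · intro hring
    have hJJ : dual (toK R K I) * dual (toK R K I) ≤ dual (toK R K I) :=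
      Submodule.mul_le.mpr fun x hx y hy => hring.2 x hx y hy
    have hnotinv : ¬ IsTInvertible K I := by
      intro hinv
      have hinv' : tOp (toK R K I * dual (toK R K I)) = 1 := hinv
      have hJle : dual (toK R K I) ≤ 1 := by
        calc dual (toK R K I) = dual (toK R K I) * 1 := (mul_one _).symm
          _ = dual (toK R K I) * tOp (toK R K I * dual (toK R K I)) := by rw [hinv']
          _ ≤ tOp (dual (toK R K I) * (toK R K I * dual (toK R K I))) := mul_tOp_le _ _
          _ ≤ tOp (toK R K I * dual (toK R K I)) := tOp_mono (by
              rw [mul_left_comm]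
              exact mul_le_mul' le_rfl hJJ)
          _ = 1 := hinv'
      have h1J : (1 : Submodule R K) ≤ dual (toK R K I) := by
        intro x hx
        obtain ⟨c, rfl⟩ := Submodule.mem_one.mp hx
        have hrw : algebraMap R K c = c • (1 : K) := by rw [Algebra.smul_def, mul_one]
        rw [hrw]
        exact Submodule.smul_mem _ c hone_mem
      have hJeq : dual (toK R K I) = 1 := le_antisymm hJle h1J
      rw [hJeq, mul_one, htI'] at hinv'
      exact htop (toK_eq_one hinv')
    refine ⟨hnotinv, fun M htM hIM => ?_⟩
    have htMt : tOp (toK R K M) = toK R K M := htM.2.1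
    constructor
    · rw [Submodule.mem_div_iff_forall_mul_mem]
      intro z hz
      rw [one_mul]
      exact toK_mono hIM hz
    · intro x hx y hy
      by_cases hall : ∀ u ∈ dual (toK R K I), u ∈ toK R K M / toK R K I
      · exact hall _ (hring.2 x (hdiv_le_dual M hx) y (hdiv_le_dual M hy))
      · push_neg at hall
        obtain ⟨u, huJ, hu⟩ := hall
        rw [Submodule.mem_div_iff_forall_mul_mem] at hu
        push_neg at hu
        obtain ⟨a, haI, hua⟩ := hu
        set B' := toK R K M ⊔ Submodule.span R {u * a} with hB'
        have huamem : u * a ∈ (1 : Submodule R K) := (hdual u).mp huJ a haI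
        have hB'le1 : B' ≤ 1 := sup_le (toK_le_one M)
          ((Submodule.span_singleton_le_iff_mem _ _).mpr huamem)
        have htB' : tOp B' = 1 := by
          by_contra hne
          have h1 : toK R K (ofK (tOp B')) = tOp B' := toK_ofK (tOp_le_one hB'le1)
          have hTBne : ofK (tOp B') ≠ ⊤ := by
            intro h
            rw [h, toK_top] at h1
            exact hne h1.symm
          have hTBt : IsTIdeal K (ofK (tOp B')) := by
            unfold IsTIdeal
            rw [h1, tOp_tOp]
          have hMTB : M ≤ ofK (tOp B') := by
            rw [le_ofK]
            exact le_sup_left.trans (le_tOp B')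
          have hEq := htM.2.2 _ hTBne hTBt hMTB
          apply hua
          have hmem2 : u * a ∈ toK R K (ofK (tOp B')) := by
            rw [h1]
            exact le_tOp B' (Submodule.mem_sup_right (Submodule.mem_span_singleton_self _))
          rw [hEq] at hmem2
          exact hmem2
        rw [Submodule.mem_div_iff_forall_mul_mem]
        intro z hz
        have hxJ : x ∈ dual (toK R K I) := hdiv_le_dual M hx
        have hyJ : y ∈ dual (toK R K I) := hdiv_le_dual M hy
        have hxyJ : x * y ∈ dual (toK R K I) := hring.2 x hxJ y hyJ
        have hxyz1 : x * y * z ∈ (1 : Submodule R K) := (hdual _).mp hxyJ z hz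
        have huxJ : u * x ∈ dual (toK R K I) := hring.2 u huJ x hxJ
        have huxa1 : u * x * a ∈ (1 : Submodule R K) := (hdual _).mp huxJ a haI
        have hyzM : y * z ∈ toK R K M := Submodule.mem_div_iff_forall_mul_mem.mp hy z hz
        have h2 : Submodule.span R {x * y * z} * B' ≤ toK R K M := by
          rw [Submodule.mul_le]
          intro w hw v hv
          obtain ⟨r, rfl⟩ := Submodule.mem_span_singleton.mp hw
          obtain ⟨m, hm, n, hn, rfl⟩ := Submodule.mem_sup.mp hv
          obtain ⟨s, rfl⟩ := Submodule.mem_span_singleton.mp hn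
          have hterm1 : (x * y * z) * m ∈ toK R K M := by
            obtain ⟨c, hc⟩ := Submodule.mem_one.mp hxyz1
            rw [← hc, ← Algebra.smul_def]
            exact Submodule.smul_mem _ c hm
          have hterm2 : (x * y * z) * (u * a) ∈ toK R K M := by
            obtain ⟨c, hc⟩ := Submodule.mem_one.mp huxa1
            have hre : (x * y * z) * (u * a) = (u * x * a) * (y * z) := by ring
            rw [hre, ← hc, ← Algebra.smul_def]
            exact Submodule.smul_mem _ c hyzM
          have hre2 : r • (x * y * z) * (m + s • (u * a))
              = r • ((x * y * z) * m) + r • (s • ((x * y * z) * (u * a))) := by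
            rw [smul_mul_assoc, mul_add, mul_smul_comm, smul_add]
          rw [hre2]
          exact Submodule.add_mem _ (Submodule.smul_mem _ r hterm1)
            (Submodule.smul_mem _ r (Submodule.smul_mem _ s hterm2))
        have hkey : Submodule.span R {x * y * z} ≤ toK R K M := by
          have h1 : Submodule.span R {x * y * z}
              ≤ tOp (Submodule.span R {x * y * z} * B') := by
            calc Submodule.span R {x * y * z}
                = Submodule.span R {x * y * z} * tOp B' := by rw [htB', mul_one]
              _ ≤ tOp (Submodule.span R {x * y * z} * B') := mul_tOp_le _ _
          exact h1.trans ((tOp_mono h2).trans (le_of_eq htMt))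
        exact hkey (Submodule.mem_span_singleton_self _)
  · rintro ⟨hninv, hM⟩
    have hTK : toK R K (ofK (tOp (toK R K I * dual (toK R K I))))
        = tOp (toK R K I * dual (toK R K I)) := toK_ofK (tOp_le_one hIJle1)
    have hTt : IsTIdeal K (ofK (tOp (toK R K I * dual (toK R K I)))) := by
      unfold IsTIdeal
      rw [hTK, tOp_tOp]
    have hTne : ofK (tOp (toK R K I * dual (toK R K I))) ≠ ⊤ := by
      intro h
      apply hninv
      show tOp (toK R K I * dual (toK R K I)) = 1
      rw [← hTK, h, toK_top]
    obtain ⟨M, htM, hTM⟩ := exists_tMaximal _ hTne hTt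
    have hIJleT : toK R K I * dual (toK R K I) ≤ toK R K M := by
      refine (le_tOp _).trans ?_
      rw [← hTK]
      exact toK_mono hTM
    have hIM : I ≤ M := by
      intro b hb
      have h1 : algebraMap R K b ∈ toK R K I := mem_toK.mpr hb
      have h2 : algebraMap R K b * 1 ∈ toK R K I * dual (toK R K I) :=
        Submodule.mul_mem_mul h1 hone_mem
      rw [mul_one] at h2
      exact mem_toK.mp (hIJleT h2)
    have hsub := hM M htM hIM
    refine ⟨hone_mem, ?_⟩
    intro x hx y hy
    have hmem : ∀ w ∈ dual (toK R K I), w ∈ toK R K M / toK R K I := by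
      intro w hw
      rw [Submodule.mem_div_iff_forall_mul_mem]
      intro z hz
      have h3 : z * w ∈ toK R K I * dual (toK R K I) := Submodule.mul_mem_mul hz hw
      have h4 : z * w ∈ toK R K M := hIJleT h3
      rwa [mul_comm] at h4
    exact hdiv_le_dual M (hsub.2 x (hmem x hx) y (hmem y hy))

end Statements

end

end PVMDPaper
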